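/- Let T̂ = (λ, a', s) be a Heisenberg translation and let K = span{(e,0), (a',0), (0,1)} ⊆ H ⊕ ℂ. Then H ⊕ ℂ = K ⊕ K^† (internal direct sum), T̂(K) = K and T̂(K^†) = K^†, T̂ = λ·id on K^†, ker(T̂ − λ·I) = ℂ·(e,0) ⊕ K^†, and: if a' = 0 then (T̂ − λ·I)² = 0 while T̂ − λ·I ≠ 0, whereas if a' ≠ 0 then (T̂ − λ·I)³ = 0 while (T̂ − λ·I)² ≠ 0. -/

import Mathlib

noncomputable section

variable {H : Type*} [NormedAddCommGroup H] [InnerProductSpace ℂ H] [CompleteSpace H]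

/-- The Hermitian form `Â((x,z),(y,w)) = -z·conj⟨y,e⟩ - ⟨x,e⟩·conj w + ⟨x',y'⟩`
(paper convention: linear in the first argument, with `⟨a,b⟩ = inner b a` in Mathlib,
and `x' = x - ⟨x,e⟩e`). -/
def hatA (e : H) (u v : H × ℂ) : ℂ :=
  - u.2 * (inner ℂ v.1 e : ℂ) - (inner ℂ e u.1 : ℂ) * (starRingEnd ℂ) v.2
    + (inner ℂ (v.1 - (inner ℂ e v.1 : ℂ) • e) (u.1 - (inner ℂ e u.1 : ℂ) • e) : ℂ)

/-- Membership in the group `Ĝ` of bounded bijective linear maps preserving `Â`. -/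
def memGhat (e : H) (T : (H × ℂ) →L[ℂ] (H × ℂ)) : Prop :=
  Function.Bijective T ∧ ∀ u v : H × ℂ, hatA e (T u) (T v) = hatA e u v

/-- `T` is the Heisenberg translation `(λ, a', s)`: an element of `Ĝ` sending
`(x,z)` to `λ·((⟨x,e⟩ + ⟨x',a'⟩ + s·z)·e + x' + z·a', z)`, where `|λ| = 1`,
`a' ⊥ e`, `s ≠ 0` and `Re s = ‖a'‖²/2`. -/
def IsHeisenberg (e : H) (T : (H × ℂ) →L[ℂ] (H × ℂ)) (lam : ℂ) (a' : H) (s : ℂ) :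
    Prop :=
  ‖lam‖ = 1 ∧ a' ∈ (ℂ ∙ e)ᗮ ∧ s ≠ 0 ∧ s.re = (1 / 2) * ‖a'‖ ^ 2 ∧
  memGhat e T ∧
  ∀ (x : H) (z : ℂ),
    T (x, z) = lam •
      (((((inner ℂ e x : ℂ) + (inner ℂ a' (x - (inner ℂ e x : ℂ) • e) : ℂ) + s * z) • e
          + (x - (inner ℂ e x : ℂ) • e) + z • a', z)) : H × ℂ)

/-- `K†`, the `Â`-orthogonal complement of a subspace `K` of `H ⊕ ℂ`. -/
def daggerHat (e : H) (K : Submodule ℂ (H × ℂ)) : Submodule ℂ (H × ℂ) where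
  carrier := {v | ∀ m ∈ K, hatA e v m = 0}
  add_mem' := by
    intro a b ha hb m hm
    have h1 := ha m hm
    have h2 := hb m hm
    simp only [hatA, Prod.fst_add, Prod.snd_add, inner_add_right, inner_sub_right,
      inner_smul_right, add_smul] at *
    ring_nf at *
    linear_combination h1 + h2
  zero_mem' := by
    intro m hm
    simp [hatA]
  smul_mem' := by
    intro c a ha m hm
    have h1 := ha m hm
    simp only [hatA, Prod.smul_fst, Prod.smul_snd, inner_smul_right, inner_sub_right,
      smul_eq_mul, smul_smul] at *
    ring_nf at *
    linear_combination c * h1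

end

noncomputable section AuxHeis
set_option linter.unusedSectionVars false
set_option maxHeartbeats 1000000
variable {H : Type*} [NormedAddCommGroup H] [InnerProductSpace ℂ H] [CompleteSpace H]

lemma hatA_expand (e : H) (u v : H × ℂ) :
    hatA e u v = -u.2 * (inner ℂ v.1 e : ℂ) - (inner ℂ e u.1 : ℂ) * (starRingEnd ℂ) v.2
      + ((inner ℂ v.1 u.1 : ℂ) - (inner ℂ e u.1 : ℂ) * (inner ℂ v.1 e : ℂ)
        - (starRingEnd ℂ) (inner ℂ e v.1 : ℂ) * (inner ℂ e u.1 : ℂ)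
        + (starRingEnd ℂ) (inner ℂ e v.1 : ℂ) * (inner ℂ e u.1 : ℂ) * (inner ℂ e e : ℂ)) := by
  simp only [hatA, inner_sub_left, inner_sub_right, inner_smul_left, inner_smul_right]
  ring

section
variable {e a' : H} (he : ‖e‖ = 1) (ha : a' ∈ (ℂ ∙ e)ᗮ)
include he ha

lemma heis_hee : (inner ℂ e e : ℂ) = 1 := by
  rw [inner_self_eq_norm_sq_to_K, he]; norm_num

lemma heis_hea : (inner ℂ e a' : ℂ) = 0 := ha e (Submodule.mem_span_singleton_self e)

lemma heis_hae : (inner ℂ a' e : ℂ) = 0 := by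
  rw [← inner_conj_symm, heis_hea he ha, map_zero]

/-- membership in `K†` for `K = span{(e,0),(a',0),(0,1)}` -/
lemma mem_daggerK_iff (v : H × ℂ) :
    v ∈ daggerHat e (Submodule.span ℂ {((e, 0) : H × ℂ), ((a', 0) : H × ℂ), ((0, 1) : H × ℂ)}) ↔
      v.2 = 0 ∧ (inner ℂ e v.1 : ℂ) = 0 ∧ (inner ℂ a' v.1 : ℂ) = 0 := by
  have g1 : ((e, 0) : H × ℂ) ∈
      Submodule.span ℂ {((e, 0) : H × ℂ), ((a', 0) : H × ℂ), ((0, 1) : H × ℂ)} :=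
    Submodule.subset_span (by simp)
  have g2 : ((a', 0) : H × ℂ) ∈
      Submodule.span ℂ {((e, 0) : H × ℂ), ((a', 0) : H × ℂ), ((0, 1) : H × ℂ)} :=
    Submodule.subset_span (by simp)
  have g3 : ((0, 1) : H × ℂ) ∈
      Submodule.span ℂ {((e, 0) : H × ℂ), ((a', 0) : H × ℂ), ((0, 1) : H × ℂ)} :=
    Submodule.subset_span (by simp)
  constructor
  · intro hv
    have h1 := hv _ g1
    have h2 := hv _ g2
    have h3 := hv _ g3
    rw [hatA_expand] at h1 h2 h3
    simp only [heis_hee he ha, heis_hea he ha, heis_hae he ha, inner_zero_left, map_zero,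
      map_one] at h1 h2 h3
    refine ⟨by linear_combination -h1, by linear_combination -h3, by linear_combination h2⟩
  · rintro ⟨h2, he', ha'⟩ m hm
    induction hm using Submodule.span_induction with
    | mem m hm =>
      rcases hm with h | h | h <;> subst h <;>
        · rw [hatA_expand]
          simp [h2, he', ha', heis_hee he ha, heis_hea he ha, heis_hae he ha]
    | zero => rw [hatA_expand]; simp [h2, he']
    | add x y hx hy ihx ihy =>
      rw [hatA_expand] at *
      simp only [Prod.fst_add, Prod.snd_add, inner_add_left, inner_add_right, map_add] at *
      linear_combination ihx + ihy
    | smul c x hx ih =>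
      rw [hatA_expand] at *
      simp only [Prod.smul_fst, Prod.smul_snd, inner_smul_left, inner_smul_right, map_mul,
        smul_eq_mul] at *
      linear_combination (starRingEnd ℂ) c * ih

end
end AuxHeis

section
set_option linter.unusedSectionVars false
set_option maxHeartbeats 1000000
variable {H : Type*} [NormedAddCommGroup H] [InnerProductSpace ℂ H] [CompleteSpace H]

/-- decomposition of `H ⊕ ℂ` determined by a Heisenberg translation
`T̂ = (λ, a', s)`, with `K = span{(e,0), (a',0), (0,1)}`: `H ⊕ ℂ = K ⊕ K†`,
`T̂` preserves both pieces, acts as `λ·id` on `K†`, has `ker(T̂ - λI) = ℂ(e,0) ⊕ K†`,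
and `T̂ - λI` is nilpotent of order exactly 2 (vertical case) or 3 (non-vertical). -/
theorem heisenberg_decomposition
    (e : H) (he : ‖e‖ = 1) (lam : ℂ) (a' : H) (s : ℂ)
    (T : (H × ℂ) →L[ℂ] (H × ℂ)) (hT : IsHeisenberg e T lam a' s)
    (K : Submodule ℂ (H × ℂ))
    (hK : K = Submodule.span ℂ {((e, 0) : H × ℂ), ((a', 0) : H × ℂ), ((0, 1) : H × ℂ)}) :
    -- internal direct sum H ⊕ ℂ = K ⊕ K†
    IsCompl K (daggerHat e K) ∧
    -- T̂(K) = K and T̂(K†) = K†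
    (T '' (K : Set (H × ℂ)) = (K : Set (H × ℂ))) ∧
    (T '' (daggerHat e K : Set (H × ℂ)) = (daggerHat e K : Set (H × ℂ))) ∧
    -- T̂ = λ·id on K†
    (∀ v ∈ daggerHat e K, T v = lam • v) ∧
    -- ker(T̂ - λ·I) = ℂ·(e,0) ⊕ K†
    ({v : H × ℂ | T v = lam • v}
      = ((Submodule.span ℂ {((e, 0) : H × ℂ)} ⊔ daggerHat e K : Submodule ℂ (H × ℂ)) :
          Set (H × ℂ))) ∧
    -- nilpotency degree of T̂ - λ·I
    (a' = 0 →
      (T - lam • ContinuousLinearMap.id ℂ (H × ℂ)) ∘L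
        (T - lam • ContinuousLinearMap.id ℂ (H × ℂ)) = 0 ∧
      T - lam • ContinuousLinearMap.id ℂ (H × ℂ) ≠ 0) ∧
    (a' ≠ 0 →
      (T - lam • ContinuousLinearMap.id ℂ (H × ℂ)) ∘L
        ((T - lam • ContinuousLinearMap.id ℂ (H × ℂ)) ∘L
          (T - lam • ContinuousLinearMap.id ℂ (H × ℂ))) = 0 ∧
      (T - lam • ContinuousLinearMap.id ℂ (H × ℂ)) ∘L
        (T - lam • ContinuousLinearMap.id ℂ (H × ℂ)) ≠ 0) := by
  obtain ⟨hlam, ha, hs, hsre, hGhat, hTdef⟩ := hT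
  subst hK
  have hee := heis_hee he ha
  have hea := heis_hea he ha
  have hae := heis_hae he ha
  have haa : (inner ℂ a' a' : ℂ) = (‖a'‖ : ℂ) ^ 2 := inner_self_eq_norm_sq_to_K a'
  have hlam0 : lam ≠ 0 := fun h => by rw [h] at hlam; simp at hlam
  have he0 : e ≠ 0 := fun h => by rw [h] at he; simp at he
  -- simplified formula for T
  have hT' : ∀ (x : H) (z : ℂ),
      T (x, z) = lam • ((x + (((inner ℂ a' x : ℂ) + s * z)) • e + z • a', z) : H × ℂ) := by
    intro x z
    rw [hTdef x z, inner_sub_right, inner_smul_right, hae, mul_zero, sub_zero]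
    congr 1
    rw [Prod.mk.injEq]
    exact ⟨by module, rfl⟩
  have hTg1 : T ((e, 0) : H × ℂ) = lam • ((e, 0) : H × ℂ) := by
    rw [hT' e 0, hae]
    refine Prod.ext_iff.mpr ⟨?_, rfl⟩
    show lam • (e + ((0 : ℂ) + s * 0) • e + (0 : ℂ) • a') = lam • e
    module
  -- description of the members of K
  have memK_iff : ∀ v : H × ℂ,
      v ∈ Submodule.span ℂ {((e, 0) : H × ℂ), ((a', 0) : H × ℂ), ((0, 1) : H × ℂ)} ↔
        ∃ α β γ : ℂ, v = (α • e + β • a', γ) := by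
    intro v
    constructor
    · intro hv
      induction hv using Submodule.span_induction with
      | mem m hm =>
        rcases hm with h | h | h <;> subst h
        · exact ⟨1, 0, 0, by simp⟩
        · exact ⟨0, 1, 0, by simp⟩
        · exact ⟨0, 0, 1, by simp⟩
      | zero => exact ⟨0, 0, 0, by simp; rfl⟩
      | add x y hx hy ihx ihy =>
        obtain ⟨α, β, γ, rfl⟩ := ihx
        obtain ⟨α', β', γ', rfl⟩ := ihy
        refine ⟨α + α', β + β', γ + γ', Prod.ext_iff.mpr ⟨?_, rfl⟩⟩
        show (α • e + β • a') + (α' • e + β' • a') = (α + α') • e + (β + β') • a'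
        module
      | smul c x hx ih =>
        obtain ⟨α, β, γ, rfl⟩ := ih
        refine ⟨c * α, c * β, c * γ, Prod.ext_iff.mpr ⟨?_, rfl⟩⟩
        show c • (α • e + β • a') = (c * α) • e + (c * β) • a'
        module
    · rintro ⟨α, β, γ, rfl⟩
      have hrep : ((α • e + β • a', γ) : H × ℂ)
          = α • ((e, 0) : H × ℂ) + β • ((a', 0) : H × ℂ) + γ • ((0, 1) : H × ℂ) := by
        refine Prod.ext_iff.mpr ⟨?_, ?_⟩
        · show α • e + β • a' = (α • e + β • a') + γ • (0 : H)
          simp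
        · show γ = (α • (0:ℂ) + β • (0:ℂ)) + γ • (1:ℂ)
          simp
      rw [hrep]
      refine add_mem (add_mem ?_ ?_) ?_ <;>
        exact Submodule.smul_mem _ _ (Submodule.subset_span (by simp))
  -- the map N = T - lam • id
  have hN : ∀ v : H × ℂ,
      (T - lam • ContinuousLinearMap.id ℂ (H × ℂ)) v
        = lam • ((((inner ℂ a' v.1 : ℂ) + s * v.2) • e + v.2 • a', 0) : H × ℂ) := by
    intro v
    have h := hT' v.1 v.2
    rw [Prod.mk.eta] at h
    rw [ContinuousLinearMap.sub_apply, ContinuousLinearMap.smul_apply,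
      ContinuousLinearMap.id_apply, h]
    refine Prod.ext_iff.mpr ⟨?_, ?_⟩
    · show lam • (v.1 + ((inner ℂ a' v.1 : ℂ) + s * v.2) • e + v.2 • a') - lam • v.1
        = lam • (((inner ℂ a' v.1 : ℂ) + s * v.2) • e + v.2 • a')
      module
    · show lam • v.2 - lam • v.2 = lam • (0 : ℂ)
      simp
  -- T = lam • id on K-dagger
  have hTdag : ∀ v ∈ daggerHat e
      (Submodule.span ℂ {((e, 0) : H × ℂ), ((a', 0) : H × ℂ), ((0, 1) : H × ℂ)}),
      T v = lam • v := by
    intro v hv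
    rw [mem_daggerK_iff he ha] at hv
    obtain ⟨h2, hev, hav⟩ := hv
    have h := hT' v.1 v.2
    rw [Prod.mk.eta] at h
    rw [h, hav, h2]
    refine Prod.ext_iff.mpr ⟨?_, ?_⟩
    · show lam • (v.1 + ((0 : ℂ) + s * 0) • e + (0 : ℂ) • a') = lam • v.1
      module
    · show lam • (0 : ℂ) = lam • v.2
      rw [h2]
  -- 1: IsCompl
  have hdisj : Disjoint
      (Submodule.span ℂ {((e, 0) : H × ℂ), ((a', 0) : H × ℂ), ((0, 1) : H × ℂ)})
      (daggerHat e (Submodule.span ℂ {((e, 0) : H × ℂ), ((a', 0) : H × ℂ), ((0, 1) : H × ℂ)})) := by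
    rw [Submodule.disjoint_def]
    intro v hvK hvD
    obtain ⟨α, β, γ, rfl⟩ := (memK_iff v).mp hvK
    rw [mem_daggerK_iff he ha] at hvD
    obtain ⟨h2, hev, hav⟩ := hvD
    simp only [inner_add_right, inner_smul_right, hee, hea, hae, haa, mul_one, mul_zero,
      add_zero, zero_add] at hev hav
    have hb : β • a' = 0 := by
      rcases mul_eq_zero.mp hav with h | h
      · rw [h, zero_smul]
      · have ha0 : a' = 0 := by
          have hn : ((‖a'‖ : ℝ) : ℂ) = 0 :=
            pow_eq_zero_iff (n := 2) (by norm_num) |>.mp h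
          have : ‖a'‖ = 0 := by exact_mod_cast hn
          simpa using this
        rw [ha0, smul_zero]
    refine Prod.ext_iff.mpr ⟨?_, ?_⟩
    · show α • e + β • a' = (0 : H)
      rw [hev, zero_smul, zero_add, hb]
    · exact h2
  have hcodisj : Codisjoint
      (Submodule.span ℂ {((e, 0) : H × ℂ), ((a', 0) : H × ℂ), ((0, 1) : H × ℂ)})
      (daggerHat e (Submodule.span ℂ {((e, 0) : H × ℂ), ((a', 0) : H × ℂ), ((0, 1) : H × ℂ)})) := by
    rw [codisjoint_iff, eq_top_iff]
    intro v _
    refine Submodule.mem_sup.mpr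
      ⟨((inner ℂ e v.1 : ℂ) • e + ((inner ℂ a' v.1 : ℂ) / ((‖a'‖ : ℂ) ^ 2)) • a', v.2),
        (memK_iff _).mpr ⟨_, _, _, rfl⟩,
        (v.1 - (inner ℂ e v.1 : ℂ) • e - ((inner ℂ a' v.1 : ℂ) / ((‖a'‖ : ℂ) ^ 2)) • a', 0),
        ?_, ?_⟩
    · rw [mem_daggerK_iff he ha]
      refine ⟨rfl, ?_, ?_⟩
      · simp [inner_sub_right, inner_smul_right, hee, hea, he]
      · simp only [inner_sub_right, inner_smul_right, hae, haa, mul_zero, sub_zero]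
        rcases eq_or_ne a' 0 with h0 | h0
        · rw [h0]; simp
        · have hn : ((‖a'‖ : ℂ) ^ 2) ≠ 0 := by
            simp [pow_eq_zero_iff, Complex.ofReal_eq_zero, norm_eq_zero, h0]
          field_simp
          rw [div_self (by simpa using h0), sub_self, mul_zero]
    · refine Prod.ext_iff.mpr ⟨?_, ?_⟩
      · show ((inner ℂ e v.1 : ℂ) • e + ((inner ℂ a' v.1 : ℂ) / ((‖a'‖ : ℂ) ^ 2)) • a')
            + (v.1 - (inner ℂ e v.1 : ℂ) • e - ((inner ℂ a' v.1 : ℂ) / ((‖a'‖ : ℂ) ^ 2)) • a') = v.1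
        module
      · show v.2 + (0 : ℂ) = v.2
        simp
  -- 2: T '' K = K
  have hvv2 : T (((a', 0) : H × ℂ) - ((‖a'‖ : ℂ) ^ 2) • ((e, 0) : H × ℂ))
      = lam • ((a', 0) : H × ℂ) := by
    rw [map_sub, map_smul, hTg1, hT' a' 0, haa]
    refine Prod.ext_iff.mpr ⟨?_, ?_⟩
    · show lam • (a' + ((‖a'‖ : ℂ) ^ 2 + s * 0) • e + (0 : ℂ) • a')
          - ((‖a'‖ : ℂ) ^ 2) • (lam • e) = lam • a'
      module
    · show lam • (0 : ℂ) - ((‖a'‖ : ℂ) ^ 2) • (lam • (0 : ℂ)) = lam • (0 : ℂ)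
      simp
  have hvv3 : T (((0, 1) : H × ℂ) - ((a', 0) : H × ℂ) + (((‖a'‖ : ℂ) ^ 2) - s) • ((e, 0) : H × ℂ))
      = lam • ((0, 1) : H × ℂ) := by
    rw [map_add, map_sub, map_smul, hTg1, hT' 0 1, hT' a' 0, haa]
    refine Prod.ext_iff.mpr ⟨?_, ?_⟩
    · show lam • ((0 : H) + ((inner ℂ a' (0 : H) : ℂ) + s * 1) • e + (1 : ℂ) • a')
          - lam • (a' + ((‖a'‖ : ℂ) ^ 2 + s * 0) • e + (0 : ℂ) • a')
          + (((‖a'‖ : ℂ) ^ 2) - s) • (lam • e) = lam • (0 : H)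
      simp only [inner_zero_right]
      module
    · show lam • (1 : ℂ) - lam • (0 : ℂ) + (((‖a'‖ : ℂ) ^ 2) - s) • (lam • (0 : ℂ)) = lam • (1 : ℂ)
      simp
  have hmapK : Submodule.map (T : (H × ℂ) →ₗ[ℂ] (H × ℂ))
      (Submodule.span ℂ {((e, 0) : H × ℂ), ((a', 0) : H × ℂ), ((0, 1) : H × ℂ)})
      = Submodule.span ℂ {((e, 0) : H × ℂ), ((a', 0) : H × ℂ), ((0, 1) : H × ℂ)} := by
    apply le_antisymm
    · rw [Submodule.map_le_iff_le_comap, Submodule.span_le]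
      rintro m hm
      simp only [Set.mem_insert_iff, Set.mem_singleton_iff] at hm
      rcases hm with rfl | rfl | rfl <;>
        simp only [SetLike.mem_coe, Submodule.mem_comap, ContinuousLinearMap.coe_coe]
      · rw [hTg1]
        exact Submodule.smul_mem _ _ (Submodule.subset_span (by simp))
      · rw [hT' a' 0]
        refine Submodule.smul_mem _ _ ((memK_iff _).mpr
          ⟨(inner ℂ a' a' : ℂ) + s * 0, 1, 0, Prod.ext_iff.mpr ⟨?_, rfl⟩⟩)
        show a' + ((inner ℂ a' a' : ℂ) + s * 0) • e + (0 : ℂ) • a'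
          = ((inner ℂ a' a' : ℂ) + s * 0) • e + (1 : ℂ) • a'
        module
      · rw [hT' 0 1]
        refine Submodule.smul_mem _ _ ((memK_iff _).mpr
          ⟨(inner ℂ a' (0 : H) : ℂ) + s * 1, 1, 1, Prod.ext_iff.mpr ⟨?_, rfl⟩⟩)
        show (0 : H) + ((inner ℂ a' (0 : H) : ℂ) + s * 1) • e + (1 : ℂ) • a'
          = ((inner ℂ a' (0 : H) : ℂ) + s * 1) • e + (1 : ℂ) • a'
        module
    · rw [Submodule.span_le]
      rintro m hm
      simp only [Set.mem_insert_iff, Set.mem_singleton_iff] at hm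
      rcases hm with rfl | rfl | rfl <;> simp only [SetLike.mem_coe]
      · refine Submodule.mem_map.mpr ⟨lam⁻¹ • ((e, 0) : H × ℂ),
          Submodule.smul_mem _ _ (Submodule.subset_span (by simp)), ?_⟩
        show T (lam⁻¹ • ((e, 0) : H × ℂ)) = ((e, 0) : H × ℂ)
        rw [map_smul, hTg1, smul_smul, inv_mul_cancel₀ hlam0, one_smul]
      · refine Submodule.mem_map.mpr
          ⟨lam⁻¹ • (((a', 0) : H × ℂ) - ((‖a'‖ : ℂ) ^ 2) • ((e, 0) : H × ℂ)),
            Submodule.smul_mem _ _ (sub_mem (Submodule.subset_span (by simp))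
              (Submodule.smul_mem _ _ (Submodule.subset_span (by simp)))), ?_⟩
        show T (lam⁻¹ • (((a', 0) : H × ℂ) - ((‖a'‖ : ℂ) ^ 2) • ((e, 0) : H × ℂ)))
          = ((a', 0) : H × ℂ)
        rw [map_smul, hvv2, smul_smul, inv_mul_cancel₀ hlam0, one_smul]
      · refine Submodule.mem_map.mpr
          ⟨lam⁻¹ • (((0, 1) : H × ℂ) - ((a', 0) : H × ℂ)
              + (((‖a'‖ : ℂ) ^ 2) - s) • ((e, 0) : H × ℂ)),
            Submodule.smul_mem _ _ (add_mem (sub_mem (Submodule.subset_span (by simp))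
              (Submodule.subset_span (by simp)))
              (Submodule.smul_mem _ _ (Submodule.subset_span (by simp)))), ?_⟩
        show T (lam⁻¹ • (((0, 1) : H × ℂ) - ((a', 0) : H × ℂ)
            + (((‖a'‖ : ℂ) ^ 2) - s) • ((e, 0) : H × ℂ))) = ((0, 1) : H × ℂ)
        rw [map_smul, hvv3, smul_smul, inv_mul_cancel₀ hlam0, one_smul]
  have himgK : T '' ((Submodule.span ℂ
        {((e, 0) : H × ℂ), ((a', 0) : H × ℂ), ((0, 1) : H × ℂ)} : Submodule ℂ (H × ℂ)) :
        Set (H × ℂ))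
      = ((Submodule.span ℂ {((e, 0) : H × ℂ), ((a', 0) : H × ℂ), ((0, 1) : H × ℂ)}) :
        Set (H × ℂ)) := by
    have hcoe : T '' ((Submodule.span ℂ
          {((e, 0) : H × ℂ), ((a', 0) : H × ℂ), ((0, 1) : H × ℂ)}) : Set (H × ℂ))
        = ((Submodule.map (T : (H × ℂ) →ₗ[ℂ] (H × ℂ))
            (Submodule.span ℂ {((e, 0) : H × ℂ), ((a', 0) : H × ℂ), ((0, 1) : H × ℂ)})) :
          Set (H × ℂ)) := by
      rw [Submodule.map_coe, ContinuousLinearMap.coe_coe]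
    rw [hcoe, hmapK]
  -- 3: T '' K-dagger = K-dagger
  have himgD : T '' ((daggerHat e (Submodule.span ℂ
        {((e, 0) : H × ℂ), ((a', 0) : H × ℂ), ((0, 1) : H × ℂ)})) : Set (H × ℂ))
      = ((daggerHat e (Submodule.span ℂ
        {((e, 0) : H × ℂ), ((a', 0) : H × ℂ), ((0, 1) : H × ℂ)})) : Set (H × ℂ)) := by
    apply Set.Subset.antisymm
    · rintro _ ⟨w, hw, rfl⟩
      have hw' : w ∈ daggerHat e (Submodule.span ℂ
          {((e, 0) : H × ℂ), ((a', 0) : H × ℂ), ((0, 1) : H × ℂ)}) := hw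
      show T w ∈ daggerHat e (Submodule.span ℂ
          {((e, 0) : H × ℂ), ((a', 0) : H × ℂ), ((0, 1) : H × ℂ)})
      rw [hTdag w hw']
      exact Submodule.smul_mem _ _ hw'
    · intro v hv
      have hv' : v ∈ daggerHat e (Submodule.span ℂ
          {((e, 0) : H × ℂ), ((a', 0) : H × ℂ), ((0, 1) : H × ℂ)}) := hv
      refine ⟨lam⁻¹ • v, Submodule.smul_mem _ _ hv', ?_⟩
      rw [map_smul, hTdag v hv', smul_smul, inv_mul_cancel₀ hlam0, one_smul]
  -- 5: kernel of T - lam • id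
  have hker : {v : H × ℂ | T v = lam • v}
      = ((Submodule.span ℂ {((e, 0) : H × ℂ)} ⊔ daggerHat e (Submodule.span ℂ
          {((e, 0) : H × ℂ), ((a', 0) : H × ℂ), ((0, 1) : H × ℂ)}) : Submodule ℂ (H × ℂ)) :
        Set (H × ℂ)) := by
    ext v
    simp only [Set.mem_setOf_eq, SetLike.mem_coe]
    constructor
    · intro hv
      have h := hT' v.1 v.2
      rw [Prod.mk.eta] at h
      have h2 : lam • v = lam • ((v.1 + ((inner ℂ a' v.1 : ℂ) + s * v.2) • e + v.2 • a', v.2) :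
          H × ℂ) := by rw [← hv, h]
      have hv' := smul_right_injective (H × ℂ) hlam0 h2
      have h0 : v.1 = v.1 + ((inner ℂ a' v.1 : ℂ) + s * v.2) • e + v.2 • a' :=
        congrArg Prod.fst hv'
      have hce : (((inner ℂ a' v.1 : ℂ) + s * v.2) • e + v.2 • a') = 0 := by
        have h0' := h0.symm
        rwa [add_assoc, add_eq_left] at h0'
      have hc : (inner ℂ a' v.1 : ℂ) + s * v.2 = 0 := by
        have := congrArg (fun y => (inner ℂ e y : ℂ)) hce
        simpa [inner_add_right, inner_smul_right, hee, hea, he0] using this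
      have hza : v.2 • a' = 0 := by
        rw [hc, zero_smul, zero_add] at hce
        exact hce
      have hv2 : v.2 = 0 := by
        rcases smul_eq_zero.mp hza with h' | h'
        · exact h'
        · rw [h', inner_zero_left, zero_add] at hc
          exact (mul_eq_zero.mp hc).resolve_left hs
      have hva : (inner ℂ a' v.1 : ℂ) = 0 := by
        rw [hv2, mul_zero, add_zero] at hc
        exact hc
      refine Submodule.mem_sup.mpr
        ⟨(inner ℂ e v.1 : ℂ) • ((e, 0) : H × ℂ),
          Submodule.smul_mem _ _ (Submodule.mem_span_singleton_self _),
          ((v.1 - (inner ℂ e v.1 : ℂ) • e, 0) : H × ℂ), ?_, ?_⟩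
      · rw [mem_daggerK_iff he ha]
        refine ⟨rfl, ?_, ?_⟩
        · simp [inner_sub_right, inner_smul_right, hee, he]
        · simp [inner_sub_right, inner_smul_right, hae, hva]
      · refine Prod.ext_iff.mpr ⟨?_, ?_⟩
        · show (inner ℂ e v.1 : ℂ) • e + (v.1 - (inner ℂ e v.1 : ℂ) • e) = v.1
          module
        · show (inner ℂ e v.1 : ℂ) • (0 : ℂ) + (0 : ℂ) = v.2
          rw [hv2]; simp
    · intro hv
      obtain ⟨k, hk, w, hw, rfl⟩ := Submodule.mem_sup.mp hv
      obtain ⟨c, rfl⟩ := Submodule.mem_span_singleton.mp hk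
      rw [map_add, map_smul, hTg1, hTdag w hw]
      module
  refine ⟨⟨hdisj, hcodisj⟩, himgK, himgD, hTdag, hker, ?_, ?_⟩
  -- 6a: vertical case
  · intro h0
    subst h0
    constructor
    · refine ContinuousLinearMap.ext fun v => ?_
      simp only [ContinuousLinearMap.comp_apply, ContinuousLinearMap.zero_apply]
      simp only [hN]
      simp
    · intro hbad
      have h1 : (T - lam • ContinuousLinearMap.id ℂ (H × ℂ)) ((0 : H), (1 : ℂ)) = 0 := by
        rw [hbad]; rfl
      rw [hN] at h1
      simp [Prod.ext_iff, smul_eq_zero, hlam0, hs, he0] at h1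
  -- 6b: non-vertical case
  · intro ha0
    constructor
    · refine ContinuousLinearMap.ext fun v => ?_
      simp only [ContinuousLinearMap.comp_apply, ContinuousLinearMap.zero_apply]
      simp only [hN]
      simp [inner_add_right, inner_smul_right, hae, haa, inner_zero_right]
    · intro hbad
      have h1 : ((T - lam • ContinuousLinearMap.id ℂ (H × ℂ)) ∘L
          (T - lam • ContinuousLinearMap.id ℂ (H × ℂ))) ((0 : H), (1 : ℂ)) = 0 := by
        rw [hbad]; rfl
      rw [ContinuousLinearMap.comp_apply] at h1
      simp only [hN] at h1
      simp [inner_add_right, inner_smul_right, inner_zero_right, hae, haa, Prod.ext_iff,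
        smul_eq_zero, hlam0, hs, he0, ha0, pow_eq_zero_iff, Complex.ofReal_eq_zero,
        norm_eq_zero] at h1


end
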